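/- Let Γ = [1/2; r_1, r_2; α] be a blockchain oceanic game with two major miners, where r_1, r_2 ≥ 0, α > 0, r_1 + r_2 + α = 1 and r_1 + r_2 ≤ 1/2 (region Δ_1, in which the ocean holds the majority of resources). Then the value of miner 1 is φ_1 = r_1·(α − r_2)/α². -/

import Mathlib

open MeasureTheory Finset

/-- The uniform probability measure on the unit cube `[0,1]^m`. -/
noncomputable def cubeMeasure (m : ℕ) : Measure (Fin m → ℝ) :=
  Measure.pi fun _ => volume.restrict (Set.Icc (0:ℝ) 1)

/-- The event that miner `i` is pivotal: with `r(x) = ∑_j r_j · 1{X_j < X_i}`,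
`r(X_i) + α·X_i < q ≤ r(X_i) + α·X_i + r_i`. -/
def pivotEvent (m : ℕ) (q α : ℝ) (r : Fin m → ℝ) (i : Fin m) : Set (Fin m → ℝ) :=
  {x | (∑ j, if x j < x i then r j else 0) + α * x i < q ∧
       q ≤ (∑ j, if x j < x i then r j else 0) + α * x i + r i}

/-- The value `φ_i` of major miner `i` in the blockchain oceanic game
`Γ = [q; r_1,…,r_m; α]`. -/
noncomputable def minerValue (m : ℕ) (q α : ℝ) (r : Fin m → ℝ) (i : Fin m) : ℝ :=
  (cubeMeasure m (pivotEvent m q α r i)).toReal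

/-- The oceanic value `Φ = 1 - ∑_i φ_i`. -/
noncomputable def oceanicValue (m : ℕ) (q α : ℝ) (r : Fin m → ℝ) : ℝ :=
  1 - ∑ i, minerValue m q α r i

theorem stmt_5 (α r₁ r₂ : ℝ) (hr₁ : 0 ≤ r₁) (hr₂ : 0 ≤ r₂) (hα : 0 < α)
    (htot : r₁ + r₂ + α = 1) (hΔ₁ : r₁ + r₂ ≤ 1 / 2) :
    minerValue 2 (1 / 2) α ![r₁, r₂] 0 = r₁ * (α - r₂) / α ^ 2 := by
  have hα2 : (1:ℝ)/2 ≤ α := by linarith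
  set μ : Measure ℝ := volume.restrict (Set.Icc (0:ℝ) 1) with hμ
  set I₁ : Set ℝ := Set.Ico ((1/2 - r₁)/α) ((1/2)/α) with hI₁
  set I₂ : Set ℝ := Set.Ico ((1/2 - r₁ - r₂)/α) ((1/2 - r₂)/α) with hI₂
  set T : Set (ℝ × ℝ) := {p : ℝ × ℝ | if p.2 < p.1 then p.1 ∈ I₂ else p.1 ∈ I₁} with hT
  -- subsets of [0,1]
  have hsub₁ : I₁ ⊆ Set.Icc (0:ℝ) 1 := by
    rw [hI₁]
    intro a ⟨ha1, ha2⟩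
    constructor
    · have : (0:ℝ) ≤ (1/2 - r₁)/α := div_nonneg (by linarith) hα.le
      linarith
    · have : (1:ℝ)/2/α ≤ 1 := by rw [div_le_one hα]; linarith
      linarith
  have hsub₂ : I₂ ⊆ Set.Icc (0:ℝ) 1 := by
    rw [hI₂]
    intro a ⟨ha1, ha2⟩
    constructor
    · have : (0:ℝ) ≤ (1/2 - r₁ - r₂)/α := div_nonneg (by linarith) hα.le
      linarith
    · have : (1/2 - r₂)/α ≤ 1 := by rw [div_le_one hα]; linarith
      linarith
  have hTm : MeasurableSet T := by
    have : T = ({p : ℝ × ℝ | p.2 < p.1} ∩ Prod.fst ⁻¹' I₂) ∪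
        ({p : ℝ × ℝ | p.2 < p.1}ᶜ ∩ Prod.fst ⁻¹' I₁) := by
      ext p; by_cases h : p.2 < p.1 <;> simp [hT, h]
    rw [this]
    exact ((measurableSet_lt measurable_snd measurable_fst).inter
        (measurableSet_Ico.preimage measurable_fst)).union
      ((measurableSet_lt measurable_snd measurable_fst).compl.inter
        (measurableSet_Ico.preimage measurable_fst))
  have hpre : MeasurableEquiv.finTwoArrow ⁻¹' T = pivotEvent 2 (1/2) α ![r₁, r₂] 0 := by
    ext x
    simp only [Set.mem_preimage, MeasurableEquiv.finTwoArrow_apply, hT, Set.mem_setOf_eq,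
      pivotEvent, Fin.sum_univ_two, Matrix.cons_val_zero, Matrix.cons_val_one, Matrix.head_cons,
      lt_irrefl, if_false, zero_add]
    by_cases h : x 1 < x 0 <;>
      simp only [h, if_true, if_false, hI₁, hI₂, Set.mem_Ico, div_le_iff₀ hα, lt_div_iff₀ hα] <;>
      constructor <;> rintro ⟨h1, h2⟩ <;> constructor <;> nlinarith
  -- step: cubeMeasure to prod measure
  have hstep : cubeMeasure 2 (pivotEvent 2 (1/2) α ![r₁, r₂] 0) = (μ.prod μ) T := by
    rw [← hpre]
    exact (measurePreserving_finTwoArrow μ).measure_preimage hTm.nullMeasurableSet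
  -- inner measure
  have hinner : ∀ a : ℝ, μ (Prod.mk a ⁻¹' T) =
      (if a ∈ I₂ then μ (Set.Iio a) else 0) + (if a ∈ I₁ then μ (Set.Ici a) else 0) := by
    intro a
    by_cases h2 : a ∈ I₂ <;> by_cases h1 : a ∈ I₁ <;> simp only [h1, h2, if_true, if_false]
    · have : Prod.mk a ⁻¹' T = Set.univ := by
        ext b; by_cases h : b < a <;> simp [hT, h, h1, h2]
      rw [this, ← Set.Iio_union_Ici (a := a),
        measure_union (Set.Iio_disjoint_Ici le_rfl) measurableSet_Ici]
    · have : Prod.mk a ⁻¹' T = Set.Iio a := by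
        ext b; by_cases h : b < a <;> simp [hT, h, h1, h2]
      rw [this, add_zero]
    · have : Prod.mk a ⁻¹' T = Set.Ici a := by
        ext b; by_cases h : b < a <;> simp [hT, h, h1, h2]
      rw [this, zero_add]
    · have : Prod.mk a ⁻¹' T = ∅ := by
        ext b; by_cases h : b < a <;> simp [hT, h, h1, h2]
      rw [this, measure_empty, add_zero]
  have hIio : ∀ a : ℝ, a ∈ Set.Icc (0:ℝ) 1 → μ (Set.Iio a) = ENNReal.ofReal a := by
    intro a ⟨h0, h1⟩
    rw [hμ, Measure.restrict_apply measurableSet_Iio]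
    have : Set.Iio a ∩ Set.Icc (0:ℝ) 1 = Set.Ico 0 a := by
      ext b
      simp only [Set.mem_inter_iff, Set.mem_Iio, Set.mem_Icc, Set.mem_Ico]
      constructor
      · rintro ⟨hb, hb0, _⟩; exact ⟨hb0, hb⟩
      · rintro ⟨hb0, hb⟩; exact ⟨hb, hb0, by linarith⟩
    rw [this, Real.volume_Ico, sub_zero]
  have hIci : ∀ a : ℝ, a ∈ Set.Icc (0:ℝ) 1 → μ (Set.Ici a) = ENNReal.ofReal (1 - a) := by
    intro a ⟨h0, h1⟩
    rw [hμ, Measure.restrict_apply measurableSet_Ici]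
    have : Set.Ici a ∩ Set.Icc (0:ℝ) 1 = Set.Icc a 1 := by
      ext b
      simp only [Set.mem_inter_iff, Set.mem_Ici, Set.mem_Icc]
      constructor
      · rintro ⟨hb, _, hb1⟩; exact ⟨hb, hb1⟩
      · rintro ⟨hb, hb1⟩; exact ⟨hb, h0.trans hb, hb1⟩
    rw [this, Real.volume_Icc]
  -- the real integrand
  set g : ℝ → ℝ := fun a => I₂.indicator id a + I₁.indicator (fun a => 1 - a) a with hg
  have hgpt : ∀ a ∈ Set.Icc (0:ℝ) 1, μ (Prod.mk a ⁻¹' T) = ENNReal.ofReal (g a) := by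
    intro a ha
    rw [hinner a, hg]
    obtain ⟨h0, h1⟩ := ha
    by_cases h2 : a ∈ I₂ <;> by_cases hone : a ∈ I₁ <;>
      simp only [h2, hone, if_true, if_false, Set.indicator_apply, id]
    · rw [hIio a ⟨h0, h1⟩, hIci a ⟨h0, h1⟩, ← ENNReal.ofReal_add h0 (by linarith)]
    · rw [hIio a ⟨h0, h1⟩, add_zero, add_zero]
    · rw [hIci a ⟨h0, h1⟩, zero_add, zero_add]
    · simp
  have hint2 : Integrable (I₂.indicator id) μ :=
    (continuous_id.integrableOn_Icc).indicator measurableSet_Ico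
  have hint1 : Integrable (I₁.indicator (fun a : ℝ => 1 - a)) μ :=
    ((continuous_const.sub continuous_id).integrableOn_Icc).indicator measurableSet_Ico
  -- prod measure as lintegral
  have hprod : (μ.prod μ) T = ENNReal.ofReal (∫ a, g a ∂μ) := by
    rw [Measure.prod_apply hTm]
    have h1 : ∫⁻ a, μ (Prod.mk a ⁻¹' T) ∂μ = ∫⁻ a, ENNReal.ofReal (g a) ∂μ := by
      rw [hμ]
      refine setLIntegral_congr_fun measurableSet_Icc ?_
      intro a ha
      exact hgpt a ha
    rw [h1]
    have hgint : Integrable g μ := hint2.add hint1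
    have hgnn : 0 ≤ᶠ[ae μ] g := by
      refine ae_of_all _ ?_
      intro a
      rw [hg]
      refine add_nonneg (Set.indicator_nonneg ?_ a) (Set.indicator_nonneg ?_ a)
      · intro x hx; exact (hsub₂ hx).1
      · intro x hx; linarith [(hsub₁ hx).2]
    exact (ofReal_integral_eq_lintegral_ofReal hgint hgnn).symm
  -- evaluate the integral
  have hle₁ : (1/2 - r₁)/α ≤ (1/2)/α := by
    apply div_le_div_of_nonneg_right (by linarith) hα.le
  have hle₂ : (1/2 - r₁ - r₂)/α ≤ (1/2 - r₂)/α := by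
    apply div_le_div_of_nonneg_right (by linarith) hα.le
  have e2 : ∫ a, I₂.indicator id a ∂μ
      = (((1/2 - r₂)/α)^2 - ((1/2 - r₁ - r₂)/α)^2)/2 := by
    rw [integral_indicator measurableSet_Ico, hμ,
      Measure.restrict_restrict measurableSet_Ico, Set.inter_eq_left.mpr hsub₂, hI₂,
      MeasureTheory.integral_Ico_eq_integral_Ioo, ← MeasureTheory.integral_Ioc_eq_integral_Ioo,
      ← intervalIntegral.integral_of_le hle₂]
    simpa using integral_id
  have e1 : ∫ a, I₁.indicator (fun a : ℝ => 1 - a) a ∂μ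
      = ((1/2)/α - (1/2 - r₁)/α) - (((1/2)/α)^2 - ((1/2 - r₁)/α)^2)/2 := by
    rw [integral_indicator measurableSet_Ico, hμ,
      Measure.restrict_restrict measurableSet_Ico, Set.inter_eq_left.mpr hsub₁, hI₁,
      MeasureTheory.integral_Ico_eq_integral_Ioo, ← MeasureTheory.integral_Ioc_eq_integral_Ioo,
      ← intervalIntegral.integral_of_le hle₁,
      intervalIntegral.integral_sub (intervalIntegrable_const) (intervalIntegral.intervalIntegrable_id),
      intervalIntegral.integral_const, integral_id]
    simp [smul_eq_mul]
  have hval : ∫ a, g a ∂μ = r₁ * (α - r₂) / α ^ 2 := by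
    rw [hg]
    rw [integral_add hint2 hint1, e2, e1]
    have h2 : r₂ = 1 - r₁ - α := by linarith
    rw [h2]
    have hαne : α ≠ 0 := ne_of_gt hα
    field_simp
    ring
  have hnn : (0:ℝ) ≤ r₁ * (α - r₂) / α ^ 2 :=
    div_nonneg (mul_nonneg hr₁ (by linarith)) (by positivity)
  unfold minerValue
  rw [hstep, hprod, hval, ENNReal.toReal_ofReal hnn]
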